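/- Let ν = N(0, C) be the centered multivariate Gaussian measure on ℝⁿ with symmetric positive definite covariance matrix C, and let A be a symmetric n×n real matrix. Then the variance of the Gaussian quadratic form is Var_ν[⟨x, A x⟩] = 2 tr((A C)²), i.e. ∫ (⟨x, A x⟩ − tr(A C))² dν(x) = 2 tr((A C)²). -/

import Mathlib

open MeasureTheory ProbabilityTheory Matrix

/-- The multivariate Gaussian measure `N(m̄, C)` on `ℝⁿ` (with `C` symmetric positive definite),
defined as the pushforward of the standard Gaussian product measure under `x ↦ m̄ + C^{1/2} x`,
where `C^{1/2}` is the positive semidefinite square root of `C`. -/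
noncomputable def multivariateGaussian {n : ℕ} (mbar : Fin n → ℝ)
    (C : Matrix (Fin n) (Fin n) ℝ) (hC : C.PosDef) : Measure (Fin n → ℝ) :=
  Measure.map (fun x => mbar + (hC.posSemidef.isHermitian.eigenvectorUnitary.1 *
      diagonal (Real.sqrt ∘ hC.posSemidef.isHermitian.eigenvalues) *
      (star hC.posSemidef.isHermitian.eigenvectorUnitary : Matrix (Fin n) (Fin n) ℝ)).mulVec x)
    (Measure.pi fun _ : Fin n => gaussianReal 0 1)

namespace VarQFAux

open Real
open scoped ENNReal NNReal

/-! ### One-dimensional Gaussian moments -/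

lemma gaussianPDF_zero_one_eq :
    gaussianPDF 0 1 = fun x => ((Real.toNNReal (gaussianPDFReal 0 1 x) : ℝ≥0) : ℝ≥0∞) := rfl

lemma gaussianPDFReal_zero_one (t : ℝ) :
    gaussianPDFReal 0 1 t = (√(2 * π))⁻¹ * rexp (-(1/2) * t ^ 2) := by
  simp only [gaussianPDFReal, NNReal.coe_one, mul_one, sub_zero]
  ring_nf

lemma integral_gaussianReal_eq (g : ℝ → ℝ) :
    ∫ t, g t ∂(gaussianReal 0 1) = ∫ t, gaussianPDFReal 0 1 t * g t := by
  rw [gaussianReal_of_var_ne_zero 0 one_ne_zero, gaussianPDF_zero_one_eq,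
    integral_withDensity_eq_integral_smul (measurable_gaussianPDFReal 0 1).real_toNNReal g]
  congr 1
  funext t
  simp [NNReal.smul_def, Real.coe_toNNReal _ (gaussianPDFReal_nonneg 0 1 t)]

lemma integrable_pdf_mul_pow (k : ℕ) :
    Integrable (fun x : ℝ => gaussianPDFReal 0 1 x * x ^ k) volume := by
  have key : Integrable (fun x : ℝ => x ^ k * rexp (-(1/2) * x ^ 2)) volume := by
    have h := integrable_rpow_mul_exp_neg_mul_sq (b := 1/2) (by norm_num)
      (s := (k : ℝ)) (lt_of_lt_of_le neg_one_lt_zero (Nat.cast_nonneg k))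
    simpa [Real.rpow_natCast] using h
  refine (key.const_mul ((√(2 * π))⁻¹)).congr ?_
  filter_upwards with x
  rw [gaussianPDFReal_zero_one]
  ring

lemma integrable_pow_gaussian (k : ℕ) :
    Integrable (fun t : ℝ => t ^ k) (gaussianReal 0 1) := by
  rw [gaussianReal_of_var_ne_zero 0 one_ne_zero, gaussianPDF_zero_one_eq,
    integrable_withDensity_iff_integrable_smul (measurable_gaussianPDFReal 0 1).real_toNNReal]
  refine (integrable_pdf_mul_pow k).congr ?_
  filter_upwards with x
  simp [NNReal.smul_def, Real.coe_toNNReal _ (gaussianPDFReal_nonneg 0 1 x)]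

/-- `k`-th moment of the standard Gaussian. -/
noncomputable def M (k : ℕ) : ℝ := ∫ t, t ^ k ∂(gaussianReal 0 1)

lemma M0 : M 0 = 1 := by simp [M]

lemma M_odd {k : ℕ} (hk : Odd k) : M k = 0 := by
  rw [M, integral_gaussianReal_eq]
  have h : (fun x : ℝ => gaussianPDFReal 0 1 (-x) * (-x) ^ k)
      = fun x : ℝ => -(gaussianPDFReal 0 1 x * x ^ k) := by
    funext x
    rw [hk.neg_pow]
    simp only [gaussianPDFReal_zero_one, neg_sq]
    ring
  have h2 : ∫ x : ℝ, gaussianPDFReal 0 1 x * x ^ k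
      = -∫ x : ℝ, gaussianPDFReal 0 1 x * x ^ k := by
    conv_lhs => rw [← integral_neg_eq_self (fun x : ℝ => gaussianPDFReal 0 1 x * x ^ k) volume]
    rw [show (fun x : ℝ => gaussianPDFReal 0 1 (-x) * (-x) ^ k)
        = fun x : ℝ => -(gaussianPDFReal 0 1 x * x ^ k) from h, integral_neg]
  linarith

lemma M1 : M 1 = 0 := M_odd ⟨0, by norm_num⟩
lemma M3 : M 3 = 0 := M_odd ⟨1, by norm_num⟩

lemma J_even (q : ℕ) (hq : Even q) :
    ∫ x : ℝ, x ^ q * rexp (-(1/2) * x ^ 2)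
      = 2 * ((1/2 : ℝ) ^ (-(((q:ℝ)) + 1)/2) * (1/2) * Real.Gamma (((q:ℝ) + 1)/2)) := by
  have h1 := integral_comp_abs (f := fun t : ℝ => t ^ q * rexp (-(1/2) * t ^ 2))
  simp only [hq.pow_abs, sq_abs] at h1
  rw [h1]
  have hrw : (fun x : ℝ => x ^ q * rexp (-(1/2) * x ^ 2))
      = fun x : ℝ => x ^ ((q : ℝ)) * rexp (-(1/2) * x ^ ((2:ℝ))) := by
    funext x
    rw [Real.rpow_natCast, show (2:ℝ) = ((2:ℕ):ℝ) by norm_num, Real.rpow_natCast]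
  rw [hrw]
  rw [integral_rpow_mul_exp_neg_mul_rpow (by norm_num : (0:ℝ) < 2)
    (lt_of_lt_of_le neg_one_lt_zero (Nat.cast_nonneg q)) (by norm_num : (0:ℝ) < 1/2)]

lemma half_rpow_neg (a : ℝ) : (1/2 : ℝ) ^ (-a) = (2:ℝ) ^ a := by
  rw [one_div, Real.inv_rpow (by norm_num : (0:ℝ) ≤ 2),
    ← Real.rpow_neg (by norm_num : (0:ℝ) ≤ 2), neg_neg]

lemma Gamma_three_halves : Real.Gamma (3/2) = √π / 2 := by
  rw [show (3:ℝ)/2 = 1/2 + 1 by norm_num, Real.Gamma_add_one (by norm_num),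
    Real.Gamma_one_half_eq]
  ring

lemma Gamma_five_halves : Real.Gamma (5/2) = 3 * √π / 4 := by
  rw [show (5:ℝ)/2 = 3/2 + 1 by norm_num, Real.Gamma_add_one (by norm_num),
    Gamma_three_halves]
  ring

lemma two_rpow_three_halves : (2:ℝ) ^ ((3:ℝ)/2) = 2 * √2 := by
  rw [show (3:ℝ)/2 = 1 + 1/2 by norm_num, Real.rpow_add (by norm_num : (0:ℝ) < 2),
    Real.rpow_one, ← Real.sqrt_eq_rpow]

lemma two_rpow_five_halves : (2:ℝ) ^ ((5:ℝ)/2) = 4 * √2 := by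
  rw [show (5:ℝ)/2 = 2 + 1/2 by norm_num, Real.rpow_add (by norm_num : (0:ℝ) < 2),
    ← Real.sqrt_eq_rpow, show (2:ℝ) ^ (2:ℝ) = 4 by
      rw [show (2:ℝ) = ((2:ℕ):ℝ) by norm_num, Real.rpow_natCast]; norm_num]

lemma sqrt_two_pi_eq : √(2 * π) = √2 * √π := Real.sqrt_mul (by norm_num) π

lemma sqrt_two_pos : (0:ℝ) < √2 := Real.sqrt_pos.mpr (by norm_num)
lemma sqrt_pi_pos : (0:ℝ) < √π := Real.sqrt_pos.mpr Real.pi_pos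

lemma M2 : M 2 = 1 := by
  rw [M, integral_gaussianReal_eq]
  have : (fun t : ℝ => gaussianPDFReal 0 1 t * t ^ 2)
      = fun t : ℝ => (√(2 * π))⁻¹ * (t ^ 2 * rexp (-(1/2) * t ^ 2)) := by
    funext t
    rw [gaussianPDFReal_zero_one]
    ring
  rw [this, integral_const_mul, J_even 2 ⟨1, by norm_num⟩]
  rw [show ((2:ℕ):ℝ) = (2:ℝ) by norm_num, show (-((2:ℝ) + 1) / 2) = -(3/2) by norm_num,
    show ((2:ℝ) + 1) / 2 = 3/2 by norm_num, half_rpow_neg, two_rpow_three_halves,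
    Gamma_three_halves, sqrt_two_pi_eq]
  have h2 : √2 ≠ 0 := ne_of_gt sqrt_two_pos
  have hp : √π ≠ 0 := ne_of_gt sqrt_pi_pos
  field_simp

lemma M4 : M 4 = 3 := by
  rw [M, integral_gaussianReal_eq]
  have : (fun t : ℝ => gaussianPDFReal 0 1 t * t ^ 4)
      = fun t : ℝ => (√(2 * π))⁻¹ * (t ^ 4 * rexp (-(1/2) * t ^ 2)) := by
    funext t
    rw [gaussianPDFReal_zero_one]
    ring
  rw [this, integral_const_mul, J_even 4 ⟨2, by norm_num⟩]
  rw [show ((4:ℕ):ℝ) = (4:ℝ) by norm_num, show (-((4:ℝ) + 1) / 2) = -(5/2) by norm_num,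
    show ((4:ℝ) + 1) / 2 = 5/2 by norm_num, half_rpow_neg, two_rpow_five_halves,
    Gamma_five_halves, sqrt_two_pi_eq]
  have h2 : √2 ≠ 0 := ne_of_gt sqrt_two_pos
  have hp : √π ≠ 0 := ne_of_gt sqrt_pi_pos
  field_simp

/-! ### Product structure -/

variable {n : ℕ}

local notation "μn" => (Measure.pi fun _ : Fin n => gaussianReal 0 1)

lemma pi_integral (f : Fin n → ℝ → ℝ) :
    ∫ x : Fin n → ℝ, ∏ i, f i (x i) ∂μn = ∏ i, ∫ t, f i t ∂(gaussianReal 0 1) := by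
  letI : MeasureSpace ℝ := ⟨gaussianReal 0 1⟩
  haveI : SigmaFinite (volume : Measure ℝ) :=
    show SigmaFinite (gaussianReal 0 1) from inferInstance
  exact MeasureTheory.integral_fintype_prod_eq_prod f

lemma pi_integrable (f : Fin n → ℝ → ℝ) (hf : ∀ i, Integrable (f i) (gaussianReal 0 1)) :
    Integrable (fun x : Fin n → ℝ => ∏ i, f i (x i)) μn := by
  letI : MeasureSpace ℝ := ⟨gaussianReal 0 1⟩
  haveI : SigmaFinite (volume : Measure ℝ) :=
    show SigmaFinite (gaussianReal 0 1) from inferInstance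
  exact MeasureTheory.Integrable.fintype_prod hf

lemma integral_monomial (e : Fin n → ℕ) :
    ∫ x : Fin n → ℝ, ∏ m, x m ^ e m ∂μn = ∏ m, M (e m) :=
  pi_integral (fun m t => t ^ e m)

lemma integrable_monomial (e : Fin n → ℕ) :
    Integrable (fun x : Fin n → ℝ => ∏ m, x m ^ e m) μn :=
  pi_integrable _ (fun i => integrable_pow_gaussian (e i))

/-- exponent function of the degree-2 monomial `x i * x j` -/
def e2 (i j : Fin n) : Fin n → ℕ := fun m =>
  (if m = i then 1 else 0) + (if m = j then 1 else 0)

/-- exponent function of the degree-4 monomial -/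
def e4 (i j k l : Fin n) : Fin n → ℕ := fun m =>
  (if m = i then 1 else 0) + (if m = j then 1 else 0)
    + (if m = k then 1 else 0) + (if m = l then 1 else 0)

lemma single_eq (i : Fin n) (x : Fin n → ℝ) :
    (∏ m, x m ^ (if m = i then 1 else 0)) = x i := by
  simp [pow_ite]

lemma sum2_eq (i j : Fin n) (x : Fin n → ℝ) :
    x i * x j = ∏ m, x m ^ e2 i j m := by
  simp only [e2, pow_add, Finset.prod_mul_distrib, single_eq]

lemma sum4_eq (i j k l : Fin n) (x : Fin n → ℝ) :
    x i * x j * x k * x l = ∏ m, x m ^ e4 i j k l m := by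
  simp only [e4, pow_add, Finset.prod_mul_distrib, single_eq]

lemma integrable2 (i j : Fin n) :
    Integrable (fun x : Fin n → ℝ => x i * x j) μn := by
  have : (fun x : Fin n → ℝ => x i * x j) = fun x => ∏ m, x m ^ e2 i j m :=
    funext (sum2_eq i j)
  rw [this]; exact integrable_monomial _

lemma integrable4 (i j k l : Fin n) :
    Integrable (fun x : Fin n → ℝ => x i * x j * x k * x l) μn := by
  have : (fun x : Fin n → ℝ => x i * x j * x k * x l) = fun x => ∏ m, x m ^ e4 i j k l m :=
    funext (sum4_eq i j k l)
  rw [this]; exact integrable_monomial _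

lemma moment2 (i j : Fin n) :
    ∫ x : Fin n → ℝ, x i * x j ∂μn = if i = j then 1 else 0 := by
  have h : (fun x : Fin n → ℝ => x i * x j) = fun x => ∏ m, x m ^ e2 i j m :=
    funext (sum2_eq i j)
  rw [h, integral_monomial]
  by_cases hij : i = j
  · subst hij
    rw [if_pos rfl, Finset.prod_eq_single i (fun b _ hb => by simp [e2, hb, M0]) (by simp)]
    simp [e2, M2]
  · rw [if_neg hij, Finset.prod_eq_zero (Finset.mem_univ i) (by simp [e2, hij, M1])]

lemma moment4 (i j k l : Fin n) :
    ∫ x : Fin n → ℝ, x i * x j * x k * x l ∂μn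
      = (if i = j then 1 else 0) * (if k = l then 1 else 0)
        + (if i = k then 1 else 0) * (if j = l then 1 else 0)
        + (if i = l then 1 else 0) * (if j = k then 1 else 0) := by
  have h : (fun x : Fin n → ℝ => x i * x j * x k * x l) = fun x => ∏ m, x m ^ e4 i j k l m :=
    funext (sum4_eq i j k l)
  rw [h, integral_monomial]
  by_cases hij : i = j
  · subst hij
    by_cases hik : i = k
    · subst hik
      by_cases hil : i = l
      · subst hil
        rw [Finset.prod_eq_single i (fun b _ hb => by simp [e4, hb, M0]) (by simp)]
        simp [e4, M4]
        norm_num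
      · rw [Finset.prod_eq_zero (Finset.mem_univ l) (by simp [e4, Ne.symm hil, M1])]
        simp [hil]
    · by_cases hil : i = l
      · subst hil
        rw [Finset.prod_eq_zero (Finset.mem_univ k) (by simp [e4, Ne.symm hik, M1])]
        simp [hik, Ne.symm hik]
      · by_cases hkl : k = l
        · subst hkl
          have hfac : ∀ m : Fin n, M (e4 i i k k m) = 1 := by
            intro m
            by_cases hmi : m = i
            · subst hmi; simp [e4, hik, M2]
            · by_cases hmk : m = k
              · subst hmk; simp [e4, Ne.symm hik, M2]
              · simp [e4, hmi, hmk, M0]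
          rw [Finset.prod_congr rfl (fun m _ => hfac m), Finset.prod_const_one]
          simp [hik]
        · rw [Finset.prod_eq_zero (Finset.mem_univ k)
            (by simp [e4, Ne.symm hik, hkl, M1])]
          simp [hik, hkl, hil]
  · by_cases hik : i = k
    · subst hik
      by_cases hjl : j = l
      · subst hjl
        have hfac : ∀ m : Fin n, M (e4 i j i j m) = 1 := by
          intro m
          by_cases hmi : m = i
          · subst hmi; simp [e4, hij, M2]
          · by_cases hmj : m = j
            · subst hmj; simp [e4, Ne.symm hij, M2]
            · simp [e4, hmi, hmj, M0]
        rw [Finset.prod_congr rfl (fun m _ => hfac m), Finset.prod_const_one]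
        simp [hij]
      · rw [Finset.prod_eq_zero (Finset.mem_univ j)
          (by simp [e4, Ne.symm hij, hjl, M1])]
        simp [hij, hjl, Ne.symm hij]
    · by_cases hil : i = l
      · subst hil
        by_cases hjk : j = k
        · subst hjk
          have hfac : ∀ m : Fin n, M (e4 i j j i m) = 1 := by
            intro m
            by_cases hmi : m = i
            · subst hmi; simp [e4, hij, M2]
            · by_cases hmj : m = j
              · subst hmj; simp [e4, Ne.symm hij, M2]
              · simp [e4, hmi, hmj, M0]
          rw [Finset.prod_congr rfl (fun m _ => hfac m), Finset.prod_const_one]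
          simp [hij, Ne.symm hij]
        · rw [Finset.prod_eq_zero (Finset.mem_univ j)
            (by simp [e4, Ne.symm hij, hjk, M1])]
          simp [hij, hik, hjk]
      · rw [Finset.prod_eq_zero (Finset.mem_univ i) (by simp [e4, hij, hik, hil, M1])]
        simp [hij, hik, hil]

/-! ### Quadratic form computations -/

lemma Q_eq (B : Matrix (Fin n) (Fin n) ℝ) (x : Fin n → ℝ) :
    x ⬝ᵥ B.mulVec x = ∑ p : Fin n × Fin n, B p.1 p.2 * (x p.1 * x p.2) := by
  rw [Fintype.sum_prod_type]
  simp only [dotProduct, Matrix.mulVec, Finset.mul_sum]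
  exact Finset.sum_congr rfl fun i _ => Finset.sum_congr rfl fun j _ => by ring

lemma int_Q (B : Matrix (Fin n) (Fin n) ℝ) :
    ∫ x : Fin n → ℝ, x ⬝ᵥ B.mulVec x ∂μn = B.trace := by
  have h : (fun x : Fin n → ℝ => x ⬝ᵥ B.mulVec x)
      = fun x => ∑ p : Fin n × Fin n, B p.1 p.2 * (x p.1 * x p.2) := funext (Q_eq B)
  rw [h, integral_finset_sum _ (fun p _ => (integrable2 p.1 p.2).const_mul _)]
  simp_rw [integral_const_mul, moment2]
  rw [Fintype.sum_prod_type]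
  simp [Matrix.trace, Matrix.diag, mul_ite, mul_one, mul_zero]

lemma Q2_eq (B : Matrix (Fin n) (Fin n) ℝ) (x : Fin n → ℝ) :
    (x ⬝ᵥ B.mulVec x) ^ 2 = ∑ p : Fin n × Fin n, ∑ q : Fin n × Fin n,
      B p.1 p.2 * B q.1 q.2 * (x p.1 * x p.2 * x q.1 * x q.2) := by
  rw [Q_eq B, sq, Finset.sum_mul_sum]
  exact Finset.sum_congr rfl fun p _ => Finset.sum_congr rfl fun q _ => by ring

lemma int_Q2 (B : Matrix (Fin n) (Fin n) ℝ) (hB : Bᵀ = B) :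
    ∫ x : Fin n → ℝ, (x ⬝ᵥ B.mulVec x) ^ 2 ∂μn = B.trace ^ 2 + 2 * (B * B).trace := by
  have h : (fun x : Fin n → ℝ => (x ⬝ᵥ B.mulVec x) ^ 2)
      = fun x => ∑ p : Fin n × Fin n, ∑ q : Fin n × Fin n,
          B p.1 p.2 * B q.1 q.2 * (x p.1 * x p.2 * x q.1 * x q.2) := funext (Q2_eq B)
  rw [h, integral_finset_sum _ (fun p _ =>
    integrable_finset_sum _ fun q _ => (integrable4 p.1 p.2 q.1 q.2).const_mul _)]
  have hinner : ∀ p : Fin n × Fin n,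
      ∫ x : Fin n → ℝ, (∑ q : Fin n × Fin n,
          B p.1 p.2 * B q.1 q.2 * (x p.1 * x p.2 * x q.1 * x q.2)) ∂μn
      = ∑ q : Fin n × Fin n, B p.1 p.2 * B q.1 q.2 *
          ((if p.1 = p.2 then 1 else 0) * (if q.1 = q.2 then 1 else 0)
            + (if p.1 = q.1 then 1 else 0) * (if p.2 = q.2 then 1 else 0)
            + (if p.1 = q.2 then 1 else 0) * (if p.2 = q.1 then 1 else 0)) := by
    intro p
    rw [integral_finset_sum _ (fun q _ => (integrable4 p.1 p.2 q.1 q.2).const_mul _)]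
    exact Finset.sum_congr rfl fun q _ => by rw [integral_const_mul, moment4]
  rw [Finset.sum_congr rfl (fun p _ => hinner p)]
  have hD : ∑ p : Fin n × Fin n, B p.1 p.2 * (if p.1 = p.2 then 1 else 0) = B.trace := by
    rw [Fintype.sum_prod_type]
    simp [Matrix.trace, Matrix.diag, mul_ite, mul_one, mul_zero]
  have hBB : ∑ p : Fin n × Fin n, B p.1 p.2 * B p.2 p.1 = (B * B).trace := by
    rw [Fintype.sum_prod_type]
    simp [Matrix.trace, Matrix.diag, Matrix.mul_apply]
  have hsymm : ∀ a b : Fin n, B a b = B b a := by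
    intro a b
    have := congrFun (congrFun hB b) a
    rwa [Matrix.transpose_apply] at this
  have hBB' : ∑ p : Fin n × Fin n, B p.1 p.2 * B p.1 p.2 = (B * B).trace := by
    rw [← hBB]
    exact Finset.sum_congr rfl fun p _ => by rw [hsymm p.1 p.2]
  simp_rw [mul_add, Finset.sum_add_distrib]
  have hS1 : ∑ p : Fin n × Fin n, ∑ q : Fin n × Fin n, B p.1 p.2 * B q.1 q.2 *
      ((if p.1 = p.2 then 1 else 0) * (if q.1 = q.2 then 1 else 0)) = B.trace ^ 2 := by
    have hre : ∀ p q : Fin n × Fin n, B p.1 p.2 * B q.1 q.2 *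
        ((if p.1 = p.2 then 1 else 0) * (if q.1 = q.2 then 1 else 0))
        = (B p.1 p.2 * (if p.1 = p.2 then 1 else 0))
          * (B q.1 q.2 * (if q.1 = q.2 then 1 else 0)) := fun p q => by ring
    simp_rw [hre]
    rw [← Finset.sum_mul_sum, hD, sq]
  have hS2 : ∑ p : Fin n × Fin n, ∑ q : Fin n × Fin n, B p.1 p.2 * B q.1 q.2 *
      ((if p.1 = q.1 then 1 else 0) * (if p.2 = q.2 then 1 else 0)) = (B * B).trace := by
    have hin : ∀ p : Fin n × Fin n, ∑ q : Fin n × Fin n, B p.1 p.2 * B q.1 q.2 *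
        ((if p.1 = q.1 then 1 else 0) * (if p.2 = q.2 then 1 else 0))
        = B p.1 p.2 * B p.1 p.2 := by
      intro p
      rw [Fintype.sum_prod_type]
      simp [mul_ite, ite_mul, mul_one, mul_zero, zero_mul]
    rw [Finset.sum_congr rfl (fun p _ => hin p), hBB']
  have hS3 : ∑ p : Fin n × Fin n, ∑ q : Fin n × Fin n, B p.1 p.2 * B q.1 q.2 *
      ((if p.1 = q.2 then 1 else 0) * (if p.2 = q.1 then 1 else 0)) = (B * B).trace := by
    have hin : ∀ p : Fin n × Fin n, ∑ q : Fin n × Fin n, B p.1 p.2 * B q.1 q.2 *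
        ((if p.1 = q.2 then 1 else 0) * (if p.2 = q.1 then 1 else 0))
        = B p.1 p.2 * B p.2 p.1 := by
      intro p
      rw [Fintype.sum_prod_type]
      simp [mul_ite, ite_mul, mul_one, mul_zero, zero_mul]
    rw [Finset.sum_congr rfl (fun p _ => hin p), hBB]
  rw [hS1, hS2, hS3]
  ring

lemma integrable_Q (B : Matrix (Fin n) (Fin n) ℝ) :
    Integrable (fun x : Fin n → ℝ => x ⬝ᵥ B.mulVec x) μn := by
  have : (fun x : Fin n → ℝ => x ⬝ᵥ B.mulVec x)
      = fun x => ∑ p : Fin n × Fin n, B p.1 p.2 * (x p.1 * x p.2) := funext (Q_eq B)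
  rw [this]
  exact integrable_finset_sum _ fun p _ => (integrable2 p.1 p.2).const_mul _

lemma integrable_Q2 (B : Matrix (Fin n) (Fin n) ℝ) :
    Integrable (fun x : Fin n → ℝ => (x ⬝ᵥ B.mulVec x) ^ 2) μn := by
  have : (fun x : Fin n → ℝ => (x ⬝ᵥ B.mulVec x) ^ 2)
      = fun x => ∑ p : Fin n × Fin n, ∑ q : Fin n × Fin n,
          B p.1 p.2 * B q.1 q.2 * (x p.1 * x p.2 * x q.1 * x q.2) := by
    funext x
    rw [Q_eq B, sq, Finset.sum_mul_sum]
    exact Finset.sum_congr rfl fun p _ => Finset.sum_congr rfl fun q _ => by ring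
  rw [this]
  exact integrable_finset_sum _ fun p _ => integrable_finset_sum _ fun q _ =>
    (integrable4 p.1 p.2 q.1 q.2).const_mul _

lemma core (B : Matrix (Fin n) (Fin n) ℝ) (hB : Bᵀ = B) :
    ∫ x : Fin n → ℝ, (x ⬝ᵥ B.mulVec x - B.trace) ^ 2 ∂μn = 2 * (B * B).trace := by
  have h : (fun x : Fin n → ℝ => (x ⬝ᵥ B.mulVec x - B.trace) ^ 2)
      = fun x => ((x ⬝ᵥ B.mulVec x) ^ 2 - 2 * B.trace * (x ⬝ᵥ B.mulVec x)) + B.trace ^ 2 := by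
    funext x; ring
  have h1 : Integrable (fun x : Fin n → ℝ =>
      (x ⬝ᵥ B.mulVec x) ^ 2 - 2 * B.trace * (x ⬝ᵥ B.mulVec x)) μn :=
    (integrable_Q2 B).sub ((integrable_Q B).const_mul _)
  rw [h, integral_add h1 (integrable_const _),
    integral_sub (integrable_Q2 B) ((integrable_Q B).const_mul _),
    integral_const_mul, int_Q, int_Q2 B hB, integral_const]
  simp only [measure_univ, ENNReal.toReal_one, smul_eq_mul, one_mul, probReal_univ]
  ring

end VarQFAux

/-- The variance of the Gaussian quadratic form: for `ν = N(0, C)` and `A` symmetric,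
`∫ (⟨x, A x⟩ - tr(A C))² dν = 2 tr((A C)²)`. -/
theorem var_quadratic_form {n : ℕ}
    (C : Matrix (Fin n) (Fin n) ℝ) (hC : C.PosDef)
    (A : Matrix (Fin n) (Fin n) ℝ) (hA : A.IsSymm) :
    ∫ x, (x ⬝ᵥ A.mulVec x - (A * C).trace) ^ 2 ∂(multivariateGaussian 0 C hC)
      = 2 * ((A * C) ^ 2).trace := by
  classical
  set S := (hC.posSemidef.isHermitian.eigenvectorUnitary.1 *
      diagonal (Real.sqrt ∘ hC.posSemidef.isHermitian.eigenvalues) *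
      (star hC.posSemidef.isHermitian.eigenvectorUnitary : Matrix (Fin n) (Fin n) ℝ)) with hSdef
  have hS : Sᵀ = S := by
    rw [← Matrix.conjTranspose_eq_transpose_of_trivial, hSdef]
    simp [Matrix.conjTranspose_mul, Matrix.star_eq_conjTranspose, Matrix.mul_assoc]
  have hSS : S * S = C := by
    have hU := Unitary.coe_star_mul_self hC.posSemidef.isHermitian.eigenvectorUnitary
    have hD : diagonal (Real.sqrt ∘ hC.posSemidef.isHermitian.eigenvalues) *
        diagonal (Real.sqrt ∘ hC.posSemidef.isHermitian.eigenvalues)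
          = diagonal hC.posSemidef.isHermitian.eigenvalues := by
      rw [diagonal_mul_diagonal]
      congr 1
      funext i
      exact Real.mul_self_sqrt (hC.posSemidef.eigenvalues_nonneg i)
    conv_rhs => rw [hC.posSemidef.isHermitian.spectral_theorem, Unitary.conjStarAlgAut_apply]
    rw [hSdef]
    calc _ = hC.posSemidef.isHermitian.eigenvectorUnitary.1 *
        (diagonal (Real.sqrt ∘ hC.posSemidef.isHermitian.eigenvalues) *
        ((star hC.posSemidef.isHermitian.eigenvectorUnitary : Matrix (Fin n) (Fin n) ℝ) *
          hC.posSemidef.isHermitian.eigenvectorUnitary.1) *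
        diagonal (Real.sqrt ∘ hC.posSemidef.isHermitian.eigenvalues)) *
        (star hC.posSemidef.isHermitian.eigenvectorUnitary : Matrix (Fin n) (Fin n) ℝ) := by
          simp only [Matrix.mul_assoc]
      _ = _ := by
          rw [hU, Matrix.mul_one, hD]
          simp
  set B := S * A * S with hBdef
  have hBsym : Bᵀ = B := by
    rw [hBdef, Matrix.transpose_mul, hS, Matrix.transpose_mul, hS, hA.eq, Matrix.mul_assoc S A S]
  have htr1 : B.trace = (A * C).trace := by
    rw [hBdef, ← hSS, Matrix.trace_mul_comm (S * A) S, ← Matrix.mul_assoc,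
      Matrix.trace_mul_comm]
  have htr2 : (B * B).trace = ((A * C) ^ 2).trace := by
    have hexp : B * B = S * (A * (C * (A * S))) := by
      rw [hBdef, ← hSS]
      simp only [Matrix.mul_assoc]
    rw [hexp, Matrix.trace_mul_comm S, sq, ← hSS]
    simp only [Matrix.mul_assoc]
  have hmap : _root_.multivariateGaussian 0 C hC
      = Measure.map (fun x => S.mulVec x) (Measure.pi fun _ : Fin n => gaussianReal 0 1) := by
    rw [_root_.multivariateGaussian]
    congr 1
    funext x
    simp [hSdef]
  have hmeas : Measurable fun x : Fin n → ℝ => S.mulVec x := by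
    apply measurable_pi_lambda
    intro i
    show Measurable fun x : Fin n → ℝ => ∑ j, S i j * x j
    exact Finset.measurable_sum _ fun j _ => (measurable_pi_apply j).const_mul _
  have hint : Measurable fun y : Fin n → ℝ => (y ⬝ᵥ A.mulVec y - (A * C).trace) ^ 2 := by
    apply Measurable.pow_const
    apply Measurable.sub_const
    show Measurable fun y : Fin n → ℝ => ∑ i, y i * ∑ j, A i j * y j
    exact Finset.measurable_sum _ fun i _ => (measurable_pi_apply i).mul
      (Finset.measurable_sum _ fun j _ => (measurable_pi_apply j).const_mul _)
  rw [hmap, integral_map hmeas.aemeasurable hint.aestronglyMeasurable]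
  have hpt : ∀ x : Fin n → ℝ,
      (S.mulVec x) ⬝ᵥ A.mulVec (S.mulVec x) = x ⬝ᵥ B.mulVec x := by
    intro x
    have h1 : S.mulVec x = Matrix.vecMul x S := by
      conv_lhs => rw [← hS]
      exact Matrix.mulVec_transpose S x
    conv_rhs => rw [hBdef, Matrix.mul_assoc, ← Matrix.mulVec_mulVec,
      Matrix.dotProduct_mulVec]
    rw [Matrix.mulVec_mulVec, h1]
  trans (∫ x, (x ⬝ᵥ B.mulVec x - B.trace) ^ 2
      ∂(Measure.pi fun _ : Fin n => gaussianReal 0 1))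
  · refine integral_congr_ae (Filter.Eventually.of_forall fun x => ?_)
    show ((S.mulVec x) ⬝ᵥ A.mulVec (S.mulVec x) - (A * C).trace) ^ 2
      = (x ⬝ᵥ B.mulVec x - B.trace) ^ 2
    rw [hpt x, htr1]
  · rw [VarQFAux.core B hBsym, htr2]
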